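/- For every a ∈ ℂ, the 2×2×2 tensor T over ℂ with slices T(0,·,·) = [[a, 1], [1, 0]] and T(1,·,·) = [[1, 0], [0, 0]] has rank exactly 3. -/

import Mathlib

lemma core13 (a x0 y0 b0 c0 d0 e0 x1 y1 b1 c1 d1 e1 : ℂ)
    (h1 : y0 * b0 * d0 + y1 * b1 * d1 = 1)
    (h2 : y0 * b0 * e0 + y1 * b1 * e1 = 0)
    (h3 : y0 * c0 * d0 + y1 * c1 * d1 = 0)
    (h4 : y0 * c0 * e0 + y1 * c1 * e1 = 0)
    (h5 : x0 * b0 * d0 + x1 * b1 * d1 = a)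
    (h6 : x0 * b0 * e0 + x1 * b1 * e1 = 1)
    (h7 : x0 * c0 * d0 + x1 * c1 * d1 = 1)
    (h8 : x0 * c0 * e0 + x1 * c1 * e1 = 0) : False := by
  have hA : (y1 * x0 - x1 * y0) * (b0 * d0) = y1 * a - x1 := by
    linear_combination y1 * h5 - x1 * h1
  have hB : (y1 * x0 - x1 * y0) * (b0 * e0) = y1 := by
    linear_combination y1 * h6 - x1 * h2
  have hC : (y1 * x0 - x1 * y0) * (c0 * d0) = y1 := by
    linear_combination y1 * h7 - x1 * h3
  have hD : (y1 * x0 - x1 * y0) * (c0 * e0) = 0 := by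
    linear_combination y1 * h8 - x1 * h4
  have hy1 : y1 = 0 := by
    have h : y1 ^ 2 = 0 := by
      linear_combination (-((y1 * x0 - x1 * y0) * (c0 * d0))) * hB + (-y1) * hC +
        ((y1 * x0 - x1 * y0) * (c0 * e0)) * hA + (y1 * a - x1) * hD
    exact pow_eq_zero_iff two_ne_zero |>.mp h
  have hA' : (y0 * x1 - x0 * y1) * (b1 * d1) = y0 * a - x0 := by
    linear_combination y0 * h5 - x0 * h1
  have hB' : (y0 * x1 - x0 * y1) * (b1 * e1) = y0 := by
    linear_combination y0 * h6 - x0 * h2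
  have hC' : (y0 * x1 - x0 * y1) * (c1 * d1) = y0 := by
    linear_combination y0 * h7 - x0 * h3
  have hD' : (y0 * x1 - x0 * y1) * (c1 * e1) = 0 := by
    linear_combination y0 * h8 - x0 * h4
  have hy0 : y0 = 0 := by
    have h : y0 ^ 2 = 0 := by
      linear_combination (-((y0 * x1 - x0 * y1) * (c1 * d1))) * hB' + (-y0) * hC' +
        ((y0 * x1 - x0 * y1) * (c1 * e1)) * hA' + (y0 * a - x0) * hD'
    exact pow_eq_zero_iff two_ne_zero |>.mp h
  rw [hy0, hy1] at h1
  simp at h1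



/-- A tensor of type `l × m × k` has rank one if it is nonzero and is an outer product
of three vectors. -/
def IsRankOne3 {l m k : ℕ} (T : Fin l → Fin m → Fin k → ℂ) : Prop :=
  T ≠ 0 ∧ ∃ (u : Fin l → ℂ) (v : Fin m → ℂ) (w : Fin k → ℂ),
    ∀ i j s, T i j s = u i * v j * w s

/-- The rank of a tensor of type `l × m × k`: the least `r` such that `T` is a sum of `r`
rank-one tensors. -/
noncomputable def tensorRank3 {l m k : ℕ} (T : Fin l → Fin m → Fin k → ℂ) : ℕ :=
  sInf {r | ∃ f : Fin r → (Fin l → Fin m → Fin k → ℂ),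
    (∀ s, IsRankOne3 (f s)) ∧ T = ∑ s, f s}

/-- For every `a ∈ ℂ`, the `2 × 2 × 2` tensor with slices
`[[a, 1], [1, 0]]` and `[[1, 0], [0, 0]]` has rank exactly `3`. -/
theorem stmt_13 (a : ℂ) :
    tensorRank3 (fun i j k => ![![![a, 1], ![1, 0]], ![![1, 0], ![0, 0]]] i j k) = 3 := by
  set T : Fin 2 → Fin 2 → Fin 2 → ℂ :=
    fun i j k => ![![![a, 1], ![1, 0]], ![![1, 0], ![0, 0]]] i j k with hTdef
  have hmem : 3 ∈ {r | ∃ f : Fin r → (Fin 2 → Fin 2 → Fin 2 → ℂ),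
      (∀ s, IsRankOne3 (f s)) ∧ T = ∑ s, f s} := by
    refine ⟨![fun i j k => ![(1:ℂ), 0] i * ![1, 0] j * ![a, 1] k,
             fun i j k => ![(1:ℂ), 0] i * ![0, 1] j * ![1, 0] k,
             fun i j k => ![(0:ℂ), 1] i * ![1, 0] j * ![1, 0] k], ?_, ?_⟩
    · intro s
      fin_cases s
      · exact ⟨fun h => by simpa using congrFun (congrFun (congrFun h 0) 0) 1,
          ![(1:ℂ), 0], ![1, 0], ![a, 1], fun i j s => rfl⟩
      · exact ⟨fun h => by simpa using congrFun (congrFun (congrFun h 0) 1) 0,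
          ![(1:ℂ), 0], ![0, 1], ![1, 0], fun i j s => rfl⟩
      · exact ⟨fun h => by simpa using congrFun (congrFun (congrFun h 1) 0) 0,
          ![(0:ℂ), 1], ![1, 0], ![1, 0], fun i j s => rfl⟩
    · funext i j k
      fin_cases i <;> fin_cases j <;> fin_cases k <;>
        norm_num [Fin.sum_univ_three, hTdef, Matrix.vecHead, Matrix.vecTail, Matrix.cons_val_two]
  have hlb : ∀ r ∈ {r | ∃ f : Fin r → (Fin 2 → Fin 2 → Fin 2 → ℂ),
      (∀ s, IsRankOne3 (f s)) ∧ T = ∑ s, f s}, 3 ≤ r := by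
    rintro r ⟨f, hf, hT⟩
    by_contra hcon
    push_neg at hcon
    have key : ∀ i j k, T i j k = ∑ s, f s i j k := fun i j k => by
      rw [hT]; simp
    interval_cases r
    · have := key 1 0 0
      simp [hTdef] at this
    · obtain ⟨-, u, v, w, huvw⟩ := hf 0
      have E : ∀ i j k, T i j k = u i * v j * w k := fun i j k => by
        rw [key i j k, Fin.sum_univ_one, huvw]
      exact core13 a (u 0) (u 1) (v 0) (v 1) (w 0) (w 1) 0 0 0 0 0 0
        (by have := E 1 0 0; simp only [hTdef, Matrix.cons_val_zero, Matrix.cons_val_one, Matrix.head_cons] at this; linear_combination this.symm)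
        (by have := E 1 0 1; simp only [hTdef, Matrix.cons_val_zero, Matrix.cons_val_one, Matrix.head_cons] at this; linear_combination this.symm)
        (by have := E 1 1 0; simp only [hTdef, Matrix.cons_val_zero, Matrix.cons_val_one, Matrix.head_cons] at this; linear_combination this.symm)
        (by have := E 1 1 1; simp only [hTdef, Matrix.cons_val_zero, Matrix.cons_val_one, Matrix.head_cons] at this; linear_combination this.symm)
        (by have := E 0 0 0; simp only [hTdef, Matrix.cons_val_zero, Matrix.cons_val_one, Matrix.head_cons] at this; linear_combination this.symm)
        (by have := E 0 0 1; simp only [hTdef, Matrix.cons_val_zero, Matrix.cons_val_one, Matrix.head_cons] at this; linear_combination this.symm)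
        (by have := E 0 1 0; simp only [hTdef, Matrix.cons_val_zero, Matrix.cons_val_one, Matrix.head_cons] at this; linear_combination this.symm)
        (by have := E 0 1 1; simp only [hTdef, Matrix.cons_val_zero, Matrix.cons_val_one, Matrix.head_cons] at this; linear_combination this.symm)
    · obtain ⟨-, u0, v0, w0, huvw0⟩ := hf 0
      obtain ⟨-, u1, v1, w1, huvw1⟩ := hf 1
      have E : ∀ i j k, T i j k = u0 i * v0 j * w0 k + u1 i * v1 j * w1 k :=
        fun i j k => by rw [key i j k, Fin.sum_univ_two, huvw0, huvw1]
      exact core13 a (u0 0) (u0 1) (v0 0) (v0 1) (w0 0) (w0 1)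
        (u1 0) (u1 1) (v1 0) (v1 1) (w1 0) (w1 1)
        (by have := E 1 0 0; simp only [hTdef, Matrix.cons_val_zero, Matrix.cons_val_one, Matrix.head_cons] at this; linear_combination this.symm)
        (by have := E 1 0 1; simp only [hTdef, Matrix.cons_val_zero, Matrix.cons_val_one, Matrix.head_cons] at this; linear_combination this.symm)
        (by have := E 1 1 0; simp only [hTdef, Matrix.cons_val_zero, Matrix.cons_val_one, Matrix.head_cons] at this; linear_combination this.symm)
        (by have := E 1 1 1; simp only [hTdef, Matrix.cons_val_zero, Matrix.cons_val_one, Matrix.head_cons] at this; linear_combination this.symm)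
        (by have := E 0 0 0; simp only [hTdef, Matrix.cons_val_zero, Matrix.cons_val_one, Matrix.head_cons] at this; linear_combination this.symm)
        (by have := E 0 0 1; simp only [hTdef, Matrix.cons_val_zero, Matrix.cons_val_one, Matrix.head_cons] at this; linear_combination this.symm)
        (by have := E 0 1 0; simp only [hTdef, Matrix.cons_val_zero, Matrix.cons_val_one, Matrix.head_cons] at this; linear_combination this.symm)
        (by have := E 0 1 1; simp only [hTdef, Matrix.cons_val_zero, Matrix.cons_val_one, Matrix.head_cons] at this; linear_combination this.symm)
  exact le_antisymm (Nat.sInf_le hmem) (le_csInf ⟨3, hmem⟩ hlb)
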